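/- Let α, β ≥ 0 with 2α + 3β < 1 and α + β < 1. Let N be the 3×3 matrix with rows (α/(1-α-β), β/(1-α-β), 0), (α/(1-α-β), β/(1-α-β), 1), (α/(1-α-β), β/(1-α-β), 0). Then the series ∑_{n≥1} Nⁿ converges and equals (1/(1-2α-3β)) times the matrix [[α, β, β], [2α, 2β, 1-2α-β], [α, β, β]]. -/

import Mathlib

/-- Geometric-type decay for nonnegative sequences satisfying a two-term
linear recursion with coefficient sum `< 1`. -/
lemma aux_summable_of_rec (r b : ℝ) (hr : 0 ≤ r) (hb : 0 ≤ b) (hrb : r + b < 1)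
    (x : ℕ → ℝ) (hx : ∀ n, 0 ≤ x n)
    (hrec : ∀ n, x (n + 2) = r * x (n + 1) + b * x n) :
    Summable x := by
  have hρ0 : (0:ℝ) ≤ (1 + r + b) / 2 := by linarith
  have hρ1 : (1 + r + b) / 2 < 1 := by linarith
  have key : ∀ n, x (n + 1) + (1 - r + b) / 2 * x n
      ≤ (x 1 + (1 - r + b) / 2 * x 0) * ((1 + r + b) / 2) ^ n := by
    intro n
    induction n with
    | zero => simp
    | succ n ih =>
      have hxn := hx n
      have hxn1 := hx (n + 1)
      have hp : (0:ℝ) ≤ ((1 + r + b) / 2) ^ n := pow_nonneg hρ0 n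
      have h3 : x (n + 2) + (1 - r + b) / 2 * x (n + 1)
          = (1 + r + b) / 2 * x (n + 1) + b * x n := by rw [hrec]; ring
      calc x (n + 2) + (1 - r + b) / 2 * x (n + 1)
          ≤ (1 + r + b) / 2 * (x (n + 1) + (1 - r + b) / 2 * x n) := by
            rw [h3]
            nlinarith [mul_nonneg (mul_nonneg (by linarith : (0:ℝ) ≤ 1 - b - r)
              (by linarith : (0:ℝ) ≤ 1 - b + r)) hxn]
        _ ≤ (1 + r + b) / 2 * ((x 1 + (1 - r + b) / 2 * x 0) * ((1 + r + b) / 2) ^ n) :=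
            mul_le_mul_of_nonneg_left ih hρ0
        _ = (x 1 + (1 - r + b) / 2 * x 0) * ((1 + r + b) / 2) ^ (n + 1) := by ring
  have hφ0 : 0 ≤ x 1 + (1 - r + b) / 2 * x 0 := by
    have := hx 0; have := hx 1; nlinarith
  have bound : ∀ n, x n ≤ (x 0 + 2 * (x 1 + (1 - r + b) / 2 * x 0)) * ((1 + r + b) / 2) ^ n := by
    intro n
    cases n with
    | zero => simpa using by nlinarith [hx 0]
    | succ n =>
      have h5 := key n
      have hp : (0:ℝ) ≤ ((1 + r + b) / 2) ^ n := pow_nonneg hρ0 n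
      have hxn := hx n
      have h7 : ((1 + r + b) / 2) ^ (n + 1) = ((1 + r + b) / 2) ^ n * ((1 + r + b) / 2) :=
        pow_succ _ _
      rw [h7]
      nlinarith [mul_nonneg hφ0 hp, mul_nonneg (hx 0) hp]
  exact Summable.of_nonneg_of_le hx bound
    ((summable_geometric_of_lt_one hρ0 hρ1).mul_left _)

/-- Auxiliary matrix identity. -/
lemma aux_e2 (α β a b : ℝ) (hs0 : 1 - α - β ≠ 0) (hd0 : 1 - 2*α - 3*β ≠ 0)
    (ha : a = α / (1 - α - β)) (hb : b = β / (1 - α - β)) :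
    !![1 - a, -b, 0; -a, 1 - b, -1; -a, -b, 1] *
      ((1 / (1 - 2 * α - 3 * β)) • !![α, β, β; 2 * α, 2 * β, 1 - 2 * α - β; α, β, β]) =
    !![a, b, 0; a, b, 1; a, b, 0] := by
  subst ha hb
  have hd1 : (1 - α * 2 - β * 3 : ℝ) ≠ 0 := by contrapose! hd0; linarith
  have hd2 : (1 - β * 3 - α * 2 : ℝ) ≠ 0 := by contrapose! hd0; linarith
  ext i j
  fin_cases i <;> fin_cases j <;>
    · simp [Matrix.mul_apply, Fin.sum_univ_three, Matrix.smul_apply, smul_eq_mul,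
        Matrix.vecHead, Matrix.vecTail]
      field_simp
      ring

/-- Sum of powers of the offspring mean matrix `N` of the 3-type branching
process of the homogeneous (1,2)-random walk:
`∑_{n≥1} Nⁿ = (1/(1-2α-3β)) [[α,β,β],[2α,2β,1-2α-β],[α,β,β]]`. -/
theorem stmt_6 (α β : ℝ) (hα : 0 ≤ α) (hβ : 0 ≤ β)
    (h23 : 2 * α + 3 * β < 1) (h11 : α + β < 1)
    (N : Matrix (Fin 3) (Fin 3) ℝ)
    (hN : N = !![α / (1 - α - β), β / (1 - α - β), 0;
                 α / (1 - α - β), β / (1 - α - β), 1;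
                 α / (1 - α - β), β / (1 - α - β), 0]) :
    HasSum (fun n : ℕ => N ^ (n + 1))
      ((1 / (1 - 2 * α - 3 * β)) •
        !![α, β, β; 2 * α, 2 * β, 1 - 2 * α - β; α, β, β]) := by
  have hs : (0:ℝ) < 1 - α - β := by linarith
  have hd : (0:ℝ) < 1 - 2 * α - 3 * β := by linarith
  have hs0 : (1 - α - β : ℝ) ≠ 0 := ne_of_gt hs
  have hd0 : (1 - 2 * α - 3 * β : ℝ) ≠ 0 := ne_of_gt hd
  subst hN
  set a := α / (1 - α - β) with ha'
  set b := β / (1 - α - β) with hb'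

  have ha0 : 0 ≤ a := div_nonneg hα hs.le
  have hb0 : 0 ≤ b := div_nonneg hβ hs.le
  have hab : a + 2 * b < 1 := by
    have h : a + 2 * b = (α + 2 * β) / (1 - α - β) := by rw [ha', hb']; ring
    rw [h, div_lt_one hs]; linarith
  clear_value a b
  set N : Matrix (Fin 3) (Fin 3) ℝ := !![a, b, 0; a, b, 1; a, b, 0] with hN'
  clear_value N
  set M : Matrix (Fin 3) (Fin 3) ℝ :=
    (1 / (1 - 2 * α - 3 * β)) • !![α, β, β; 2 * α, 2 * β, 1 - 2 * α - β; α, β, β] with hM'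
  clear_value M
  -- nonnegativity of entries of powers
  have hNnn : ∀ i j, 0 ≤ N i j := by
    intro i j
    fin_cases i <;> fin_cases j <;>
      simp [hN', Matrix.vecHead, Matrix.vecTail, ha0, hb0]
  have hpow : ∀ n, ∀ i j, 0 ≤ (N ^ (n + 1)) i j := by
    intro n
    induction n with
    | zero => intro i j; simpa [pow_one] using hNnn i j
    | succ n ih =>
      intro i j
      rw [pow_succ, Matrix.mul_apply]
      exact Finset.sum_nonneg fun k _ => mul_nonneg (ih i k) (hNnn k j)
  -- the cubic recursion
  have h2 : N ^ 2 = N * N := pow_two N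
  have h3 : N ^ 3 = N * N * N := by
    have h := pow_succ N 2
    rw [h2] at h
    exact h
  have hcube : N ^ 3 = (a + b) • N ^ 2 + b • N := by
    rw [h3, h2]
    ext i j
    fin_cases i <;> fin_cases j <;>
      simp [hN', Matrix.mul_apply, Fin.sum_univ_three, Matrix.vecHead, Matrix.vecTail] <;> ring
  have hrecM : ∀ n, N ^ (n + 3) = (a + b) • N ^ (n + 2) + b • N ^ (n + 1) := by
    intro n
    calc N ^ (n + 3) = N ^ n * N ^ 3 := pow_add N n 3
      _ = N ^ n * ((a + b) • N ^ 2 + b • N) := by rw [hcube]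
      _ = (a + b) • (N ^ n * N ^ 2) + b • (N ^ n * N) := by
          rw [mul_add, mul_smul_comm, mul_smul_comm]
      _ = (a + b) • N ^ (n + 2) + b • N ^ (n + 1) := by rw [← pow_add, ← pow_succ]
  -- summability of each entry
  have hx : ∀ i j, Summable fun n => (N ^ (n + 1)) i j := by
    intro i j
    refine aux_summable_of_rec (a + b) b (by linarith) hb0 (by linarith) _
      (fun n => hpow n i j) ?_
    intro n
    have h := congrFun (congrFun (hrecM n) i) j
    simpa [Matrix.add_apply, Matrix.smul_apply, smul_eq_mul] using h
  obtain ⟨S, hS⟩ : ∃ S, HasSum (fun n : ℕ => N ^ (n + 1)) S :=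
    ⟨Matrix.of fun i j => ∑' n, (N ^ (n + 1)) i j,
      Pi.hasSum.mpr fun i => Pi.hasSum.mpr fun j => (hx i j).hasSum⟩
  -- the sum satisfies (1 - N) * S = N
  have hS2 : HasSum (fun n : ℕ => N ^ (n + 2)) (S - N) := by
    have h := (hasSum_nat_add_iff' (f := fun n : ℕ => N ^ (n + 1)) 1).mpr hS
    simpa using h
  have hNS : HasSum (fun n : ℕ => N ^ (n + 2)) (N * S) := by
    have h := hS.map (AddMonoidHom.mulLeft N) (continuous_const.matrix_mul continuous_id)
    have he : (fun n : ℕ => N ^ (n + 2)) = fun n : ℕ => N * N ^ (n + 1) := by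
      funext n
      rw [show n + 2 = (n + 1) + 1 from rfl, pow_succ']
    rw [he]
    exact h
  have heq : N * S = S - N := hNS.unique hS2
  have e1 : (1 - N) * S = N := by
    rw [sub_mul, one_mul, heq, sub_sub_cancel]
  -- identify 1 - N and its determinant
  have h1N : (1 - N : Matrix (Fin 3) (Fin 3) ℝ) = !![1 - a, -b, 0; -a, 1 - b, -1; -a, -b, 1] := by
    rw [hN', Matrix.one_fin_three]
    ext i j
    fin_cases i <;> fin_cases j <;>
      simp [Matrix.vecHead, Matrix.vecTail]
  have hdet : (1 - N).det = 1 - a - 2 * b := by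
    rw [h1N, Matrix.det_fin_three]; norm_num [Matrix.vecHead, Matrix.vecTail, Matrix.cons_val_two]; ring
  have hu : IsUnit (1 - N).det := by
    rw [hdet]
    exact isUnit_iff_ne_zero.mpr (by linarith)
  haveI := (1 - N).invertibleOfIsUnitDet hu
  -- the claimed value also satisfies (1 - N) * M = N
  have e2 : (1 - N) * M = N := by
    rw [hM', h1N, hN']
    exact aux_e2 α β a b hs0 hd0 ha' hb'
  have hSM : S = M := by
    calc S = (1 - N)⁻¹ * ((1 - N) * S) :=
          (Matrix.inv_mul_cancel_left_of_invertible _ _).symm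
      _ = (1 - N)⁻¹ * ((1 - N) * M) := by rw [e1, e2]
      _ = M := Matrix.inv_mul_cancel_left_of_invertible _ _
  rw [← hSM]
  exact hS
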